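/- Let s(x) = Σ_{n ≥ 0} s_n x^n be the formal power series whose n-th coefficient s_n is the number of little Schröder paths of length 2n. Then s(x) satisfies the algebraic equation 2x·s(x)² − (1+x)·s(x) + 1 = 0. -/

import Mathlib

/-- A step of a Schröder path: upstep, downstep, or a *double* horizontal step. -/
inductive SchStep : Type
  | up : SchStep
  | down : SchStep
  | horiz : SchStep
deriving DecidableEq

/-- The number of unit steps a step occupies: `horiz` is a double horizontal step. -/
def SchStep.len : SchStep → ℕ
  | .up => 1
  | .down => 1
  | .horiz => 2

/-- The change in height produced by a step. -/
def SchStep.rise : SchStep → ℤ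
  | .up => 1
  | .down => -1
  | .horiz => 0

/-- The length of a path (a double horizontal step counts 2). -/
def pathLen (p : List SchStep) : ℕ := (p.map SchStep.len).sum

/-- The final height of a path started at height 0. -/
def pathHeight (p : List SchStep) : ℤ := (p.map SchStep.rise).sum

/-- A big Schröder path: ends at height 0 and never goes below the x-axis. -/
def IsBigSchroeder (p : List SchStep) : Prop :=
  pathHeight p = 0 ∧ ∀ q : List SchStep, q <+: p → 0 ≤ pathHeight q

/-- A little Schröder path: a big Schröder path with no double horizontal step at
height 0. -/
def IsLittleSchroeder (p : List SchStep) : Prop :=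
  IsBigSchroeder p ∧ ∀ q r : List SchStep, p = q ++ SchStep.horiz :: r → pathHeight q ≠ 0

-- basics
instance : Fintype SchStep :=
  ⟨{.up, .down, .horiz}, by intro x; cases x <;> simp⟩

@[simp] lemma pathHeight_nil : pathHeight [] = 0 := rfl
@[simp] lemma pathHeight_cons (a : SchStep) (l : List SchStep) :
    pathHeight (a :: l) = a.rise + pathHeight l := by
  simp [pathHeight]
@[simp] lemma pathHeight_append (a b : List SchStep) :
    pathHeight (a ++ b) = pathHeight a + pathHeight b := by
  simp [pathHeight]
@[simp] lemma pathLen_nil : pathLen ([] : List SchStep) = 0 := rfl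
@[simp] lemma pathLen_cons (a : SchStep) (l : List SchStep) :
    pathLen (a :: l) = a.len + pathLen l := by simp [pathLen]
@[simp] lemma pathLen_append (a b : List SchStep) :
    pathLen (a ++ b) = pathLen a + pathLen b := by simp [pathLen]

lemma length_le_pathLen (p : List SchStep) : p.length ≤ pathLen p := by
  induction p with
  | nil => simp
  | cons a t ih =>
    have : 1 ≤ a.len := by cases a <;> simp [SchStep.len]
    simp only [List.length_cons, pathLen_cons]
    omega

lemma eq_nil_of_pathLen_eq_zero {p : List SchStep} (h : pathLen p = 0) : p = [] := by
  have := length_le_pathLen p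
  rw [h, Nat.le_zero, List.length_eq_zero_iff] at this
  exact this

instance finite_paths (P : List SchStep → Prop) (n : ℕ) :
    Finite {p : List SchStep // P p ∧ pathLen p = n} := by
  have h : Set.Finite {l : List SchStep | l.length ≤ n} := List.finite_length_le _ n
  have : Finite {l : List SchStep // l.length ≤ n} := h
  refine Finite.of_injective
    (fun p => (⟨p.1, by
      have := length_le_pathLen p.1
      rw [p.2.2] at this; exact this⟩ : {l : List SchStep // l.length ≤ n})) ?_
  intro a b hab
  simpa [Subtype.ext_iff] using hab

lemma pathLen_even_of_height_zero {p : List SchStep} (h : pathHeight p = 0) :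
    ∃ m, pathLen p = 2 * m := by
  have key : ∀ q : List SchStep, (pathLen q : ℤ) % 2 = pathHeight q % 2 := by
    intro q
    induction q with
    | nil => simp
    | cons a t ih =>
      simp only [pathLen_cons, pathHeight_cons, Nat.cast_add]
      cases a <;> simp [SchStep.len, SchStep.rise] <;> omega
  have := key p
  rw [h] at this
  simp at this
  exact ⟨pathLen p / 2, by omega⟩

-- prefix case analysis
lemma prefix_append_cases {w a b : List SchStep} (h : w <+: a ++ b) :
    w <+: a ∨ ∃ w', w = a ++ w' ∧ w' <+: b := by
  obtain ⟨t, ht⟩ := h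
  rcases List.append_eq_append_iff.1 ht with ⟨c, hc1, hc2⟩ | ⟨c, hc1, hc2⟩
  · left; exact ⟨c, hc1.symm⟩
  · right; exact ⟨c, hc1, ⟨t, hc2.symm⟩⟩

@[simp] lemma isBig_nil : IsBigSchroeder [] := by
  constructor
  · rfl
  · intro q hq; rw [List.prefix_nil.1 hq]; simp

@[simp] lemma isLittle_nil : IsLittleSchroeder [] := by
  refine ⟨isBig_nil, ?_⟩
  intro q r h
  exact absurd h (by simp)

lemma isBig_horiz_cons {t : List SchStep} (ht : IsBigSchroeder t) :
    IsBigSchroeder (.horiz :: t) := by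
  refine ⟨by simp [ht.1, SchStep.rise], ?_⟩
  intro q hq
  rcases q with _ | ⟨a, q⟩
  · simp
  · obtain ⟨rfl, hq'⟩ : a = .horiz ∧ q <+: t := by
      simpa [List.cons_prefix_cons] using hq
    simpa [SchStep.rise] using ht.2 q hq'

lemma isBig_up_append {q r : List SchStep} (hq : IsBigSchroeder q) (hr : IsBigSchroeder r) :
    IsBigSchroeder (.up :: q ++ .down :: r) := by
  constructor
  · simp [hq.1, hr.1, SchStep.rise]
  · intro w hw
    rcases w with _ | ⟨a, w⟩
    · simp
    · obtain ⟨rfl, hw'⟩ : a = .up ∧ w <+: q ++ .down :: r := by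
        simpa [List.cons_prefix_cons] using hw
      rcases prefix_append_cases hw' with h | ⟨w', rfl, hw''⟩
      · have := hq.2 w h
        simp only [pathHeight_cons, SchStep.rise]; omega
      · rcases w' with _ | ⟨b, w'⟩
        · simp [hq.1, SchStep.rise]
        · obtain ⟨rfl, hw3⟩ : b = .down ∧ w' <+: r := by
            simpa [List.cons_prefix_cons] using hw''
          have := hr.2 w' hw3
          simp only [pathHeight_cons, pathHeight_append, hq.1, SchStep.rise]; omega

lemma isLittle_up_append {q r : List SchStep} (hq : IsBigSchroeder q) (hr : IsLittleSchroeder r) :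
    IsLittleSchroeder (.up :: q ++ .down :: r) := by
  refine ⟨isBig_up_append hq hr.1, ?_⟩
  intro a b hab
  rcases a with _ | ⟨c, a⟩
  · simp at hab
  · rw [List.cons_append] at hab
    obtain ⟨he, hab'⟩ := List.cons_eq_cons.1 hab
    subst he
    rcases List.append_eq_append_iff.1 hab' with ⟨c', hc1, hc2⟩ | ⟨c', hc1, hc2⟩
    · -- a = q ++ c', down :: r = c' ++ horiz :: b
      rcases c' with _ | ⟨d, c'⟩
      · simp at hc2
      · obtain ⟨hd, hr'⟩ := List.cons_eq_cons.1 hc2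
        subst hd
        have := hr.2 c' b hr'
        subst hc1
        simp only [pathHeight_cons, pathHeight_append, hq.1, SchStep.rise]
        omega
    · -- q = a ++ c'
      have := hq.2 a ⟨c', hc1.symm⟩
      simp only [pathHeight_cons, SchStep.rise]; omega

-- uniqueness of the first-return decomposition
lemma split_unique_aux {q1 q2 r1 r2 : List SchStep} (hq1 : IsBigSchroeder q1)
    (hq2 : IsBigSchroeder q2)
    (h : q1 ++ SchStep.down :: r1 = q2 ++ SchStep.down :: r2)
    (hc : ∃ c, q2 = q1 ++ c) : q1 = q2 := by
  obtain ⟨c, rfl⟩ := hc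
  rcases c with _ | ⟨d, c⟩
  · simp
  · exfalso
    rw [List.append_assoc, List.append_cancel_left_eq] at h
    obtain ⟨hd, _⟩ := List.cons_eq_cons.1 h
    subst hd
    have := hq2.2 (q1 ++ [SchStep.down]) ⟨c, by simp⟩
    simp only [pathHeight_append, hq1.1, pathHeight_cons, pathHeight_nil, SchStep.rise] at this
    omega

lemma split_unique {q1 q2 r1 r2 : List SchStep} (hq1 : IsBigSchroeder q1)
    (hq2 : IsBigSchroeder q2)
    (h : q1 ++ SchStep.down :: r1 = q2 ++ SchStep.down :: r2) : q1 = q2 ∧ r1 = r2 := by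
  have hq : q1 = q2 := by
    rcases List.append_eq_append_iff.1 h with ⟨c, hc1, _⟩ | ⟨c, hc1, _⟩
    · exact split_unique_aux hq1 hq2 h ⟨c, hc1⟩
    · exact (split_unique_aux hq2 hq1 h.symm ⟨c, hc1⟩).symm
  subst hq
  rw [List.append_cancel_left_eq] at h
  exact ⟨rfl, by simpa using h⟩

-- existence of the first-return decomposition
lemma exists_first_return {t : List SchStep} (h1 : pathHeight t = -1)
    (h2 : ∀ q, q <+: t → -1 ≤ pathHeight q) :
    ∃ q r, t = q ++ SchStep.down :: r ∧ IsBigSchroeder q := by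
  classical
  have hP : ∃ k, ∃ u, u <+: t ∧ u.length = k ∧ pathHeight u = -1 :=
    ⟨t.length, t, List.prefix_refl t, rfl, h1⟩
  obtain ⟨u, hu, hlen, hh⟩ := Nat.find_spec hP
  have hmin : ∀ v, v <+: t → v.length < Nat.find hP → pathHeight v ≠ -1 := by
    intro v hv hvl hvh
    exact absurd ⟨v, hv, rfl, hvh⟩ (Nat.find_min hP hvl)
  rcases List.eq_nil_or_concat u with rfl | ⟨u', a, rfl⟩
  · simp at hh
  · simp only [List.concat_eq_append] at hu hlen hh
    have hu' : u' <+: t := List.IsPrefix.trans ⟨[a], rfl⟩ hu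
    have hlt : u'.length < Nat.find hP := by
      rw [← hlen]; simp
    have hne : pathHeight u' ≠ -1 := hmin u' hu' hlt
    have hge : 0 ≤ pathHeight u' := by
      have := h2 u' hu'
      omega
    have ha : a.rise = -1 - pathHeight u' := by
      simp at hh; omega
    have ha' : a = SchStep.down ∧ pathHeight u' = 0 := by
      cases a with
      | up => simp only [SchStep.rise] at ha; exact False.elim (by omega)
      | down => simp only [SchStep.rise] at ha; exact ⟨rfl, by omega⟩
      | horiz => simp only [SchStep.rise] at ha; exact False.elim (by omega)
    obtain ⟨rfl, hu0⟩ := ha'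
    obtain ⟨r, hr⟩ := hu
    refine ⟨u', r, by rw [← hr]; simp, hu0, ?_⟩
    intro v hv
    by_contra hc
    push_neg at hc
    have hv' : v <+: t := hv.trans hu'
    have h1v := h2 v hv'
    have hvh : pathHeight v = -1 := by omega
    apply hmin v hv' _ hvh
    calc v.length ≤ u'.length := hv.length_le
    _ < u'.length + 1 := by omega
    _ = Nat.find hP := by rw [← hlen]; simp

-- prefix of cons helpers
lemma tail_prefix_height {t : List SchStep} {a : SchStep} (hp : IsBigSchroeder (a :: t))
    (q : List SchStep) (hq : q <+: t) : 0 ≤ a.rise + pathHeight q := by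
  have := hp.2 (a :: q) (by simpa [List.cons_prefix_cons] using hq)
  simpa using this

lemma head_not_down {t : List SchStep} (hp : IsBigSchroeder (SchStep.down :: t)) : False := by
  have := hp.2 [SchStep.down] (by simp [List.cons_prefix_cons])
  simp [SchStep.rise] at this

lemma big_decomp {p : List SchStep} (hp : IsBigSchroeder p) (hne : p ≠ []) :
    (∃ t, p = SchStep.horiz :: t ∧ IsBigSchroeder t) ∨
    (∃ q r, p = SchStep.up :: q ++ SchStep.down :: r ∧ IsBigSchroeder q ∧ IsBigSchroeder r) := by
  rcases p with _ | ⟨a, t⟩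
  · exact absurd rfl hne
  cases a with
  | down => exact absurd hp head_not_down
  | horiz =>
    left
    refine ⟨t, rfl, ?_, ?_⟩
    · have := hp.1; simpa [SchStep.rise] using this
    · intro q hq
      have := tail_prefix_height hp q hq
      simpa [SchStep.rise] using this
  | up =>
    right
    have h1 : pathHeight t = -1 := by
      have := hp.1; simp [SchStep.rise] at this; omega
    have h2 : ∀ q, q <+: t → -1 ≤ pathHeight q := by
      intro q hq
      have := tail_prefix_height hp q hq
      simp [SchStep.rise] at this; omega
    obtain ⟨q, r, rfl, hq⟩ := exists_first_return h1 h2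
    refine ⟨q, r, rfl, hq, ?_, ?_⟩
    · simp [hq.1, SchStep.rise] at h1; omega
    · intro v hv
      obtain ⟨w, rfl⟩ := hv
      have := tail_prefix_height hp (q ++ SchStep.down :: v) ⟨w, by simp⟩
      simp [hq.1, SchStep.rise] at this
      omega

lemma little_decomp {p : List SchStep} (hp : IsLittleSchroeder p) (hne : p ≠ []) :
    ∃ q r, p = SchStep.up :: q ++ SchStep.down :: r ∧ IsBigSchroeder q ∧
      IsLittleSchroeder r := by
  have hhead : ∃ t, p = SchStep.up :: t := by
    rcases p with _ | ⟨a, t⟩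
    · exact absurd rfl hne
    cases a with
    | up => exact ⟨t, rfl⟩
    | down => exact absurd hp.1 head_not_down
    | horiz => exact absurd (rfl : pathHeight ([] : List SchStep) = 0) (hp.2 [] t rfl)
  obtain ⟨t, rfl⟩ := hhead
  have h1 : pathHeight t = -1 := by
    have := hp.1.1; simp [SchStep.rise] at this; omega
  have h2 : ∀ q, q <+: t → -1 ≤ pathHeight q := by
    intro q hq
    have := tail_prefix_height hp.1 q hq
    simp [SchStep.rise] at this; omega
  obtain ⟨q, r, rfl, hq⟩ := exists_first_return h1 h2
  refine ⟨q, r, rfl, hq, ⟨?_, ?_⟩, ?_⟩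
  · simp [hq.1, SchStep.rise] at h1; omega
  · intro v hv
    obtain ⟨w, rfl⟩ := hv
    have := tail_prefix_height hp.1 (q ++ SchStep.down :: v) ⟨w, by simp⟩
    simp [hq.1, SchStep.rise] at this
    omega
  · intro a b hab
    have := hp.2 (SchStep.up :: q ++ SchStep.down :: a) b (by rw [hab]; simp)
    simp [hq.1, SchStep.rise] at this
    intro hc
    rw [hc] at this
    simp at this

-- counting
noncomputable def littleN (n : ℕ) : ℕ :=
  Nat.card {p : List SchStep // IsLittleSchroeder p ∧ pathLen p = 2 * n}

noncomputable def bigN (n : ℕ) : ℕ :=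
  Nat.card {p : List SchStep // IsBigSchroeder p ∧ pathLen p = 2 * n}

lemma card_zero (P : List SchStep → Prop) (hP : P []) :
    Nat.card {p : List SchStep // P p ∧ pathLen p = 2 * 0} = 1 := by
  have : Unique {p : List SchStep // P p ∧ pathLen p = 2 * 0} :=
    ⟨⟨⟨[], hP, rfl⟩⟩, by
      rintro ⟨a, ha, hl⟩
      have := eq_nil_of_pathLen_eq_zero (by simpa using hl)
      subst this; rfl⟩
  exact Nat.card_unique

lemma littleN_zero : littleN 0 = 1 := card_zero _ isLittle_nil
lemma bigN_zero : bigN 0 = 1 := card_zero _ isBig_nil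

lemma pathLen_up_down (q r : List SchStep) :
    pathLen (SchStep.up :: q ++ SchStep.down :: r) = 2 + pathLen q + pathLen r := by
  simp [SchStep.len]; omega

lemma littleN_succ (n : ℕ) :
    littleN (n + 1) = ∑ ij ∈ Finset.HasAntidiagonal.antidiagonal n, bigN ij.1 * littleN ij.2 := by
  classical
  letI : ∀ m, Fintype {p : List SchStep // IsBigSchroeder p ∧ pathLen p = 2 * m} :=
    fun m => Fintype.ofFinite _
  letI : ∀ m, Fintype {p : List SchStep // IsLittleSchroeder p ∧ pathLen p = 2 * m} :=
    fun m => Fintype.ofFinite _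
  set F : (Σ ij : (Finset.HasAntidiagonal.antidiagonal n : Finset (ℕ × ℕ)),
      {q : List SchStep // IsBigSchroeder q ∧ pathLen q = 2 * ij.1.1} ×
      {r : List SchStep // IsLittleSchroeder r ∧ pathLen r = 2 * ij.1.2}) →
      {p : List SchStep // IsLittleSchroeder p ∧ pathLen p = 2 * (n + 1)} :=
    fun x => ⟨SchStep.up :: x.2.1.1 ++ SchStep.down :: x.2.2.1, by
      refine ⟨isLittle_up_append x.2.1.2.1 x.2.2.2.1, ?_⟩
      rw [pathLen_up_down, x.2.1.2.2, x.2.2.2.2]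
      have := Finset.HasAntidiagonal.mem_antidiagonal.1 x.1.2
      omega⟩ with hF
  have hbij : Function.Bijective F := by
    constructor
    · rintro ⟨⟨ij1, hij1⟩, ⟨q1, hq1⟩, ⟨r1, hr1⟩⟩ ⟨⟨ij2, hij2⟩, ⟨q2, hq2⟩, ⟨r2, hr2⟩⟩ h
      simp only [hF, Subtype.mk.injEq, List.cons_append, List.cons_eq_cons, true_and] at h
      obtain ⟨hq, hr⟩ := split_unique hq1.1 hq2.1 h
      subst hq; subst hr
      have hij : ij1 = ij2 := by
        have h1 : pathLen q1 = 2 * ij1.1 := hq1.2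
        have h2 : pathLen q1 = 2 * ij2.1 := hq2.2
        have h3 : pathLen r1 = 2 * ij1.2 := hr1.2
        have h4 : pathLen r1 = 2 * ij2.2 := hr2.2
        have : ij1.1 = ij2.1 := by omega
        have : ij1.2 = ij2.2 := by omega
        exact Prod.ext ‹ij1.1 = ij2.1› ‹ij1.2 = ij2.2›
      subst hij
      rfl
    · rintro ⟨p, hp, hlen⟩
      have hne : p ≠ [] := by
        intro h; subst h; simp at hlen
      obtain ⟨q, r, rfl, hq, hr⟩ := little_decomp hp hne
      obtain ⟨i, hi⟩ := pathLen_even_of_height_zero hq.1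
      obtain ⟨j, hj⟩ := pathLen_even_of_height_zero hr.1.1
      have hij : i + j = n := by
        rw [pathLen_up_down, hi, hj] at hlen; omega
      refine ⟨⟨⟨(i, j), Finset.HasAntidiagonal.mem_antidiagonal.2 hij⟩, ⟨q, hq, hi⟩, ⟨r, hr, hj⟩⟩, rfl⟩
  have hcard := Nat.card_eq_of_bijective F hbij
  rw [littleN]
  rw [← hcard, Nat.card_eq_fintype_card, Fintype.card_sigma]
  rw [← Finset.sum_coe_sort (Finset.HasAntidiagonal.antidiagonal n)
    (fun ij => bigN ij.1 * littleN ij.2)]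
  congr 1
  ext ij
  rw [Fintype.card_prod, bigN, littleN, Nat.card_eq_fintype_card, Nat.card_eq_fintype_card]

lemma bigN_succ (n : ℕ) :
    bigN (n + 1) = bigN n + ∑ ij ∈ Finset.HasAntidiagonal.antidiagonal n, bigN ij.1 * bigN ij.2 := by
  classical
  letI : ∀ m, Fintype {p : List SchStep // IsBigSchroeder p ∧ pathLen p = 2 * m} :=
    fun m => Fintype.ofFinite _
  set F : {t : List SchStep // IsBigSchroeder t ∧ pathLen t = 2 * n} ⊕
      (Σ ij : (Finset.HasAntidiagonal.antidiagonal n : Finset (ℕ × ℕ)),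
      {q : List SchStep // IsBigSchroeder q ∧ pathLen q = 2 * ij.1.1} ×
      {r : List SchStep // IsBigSchroeder r ∧ pathLen r = 2 * ij.1.2}) →
      {p : List SchStep // IsBigSchroeder p ∧ pathLen p = 2 * (n + 1)} :=
    Sum.elim
      (fun t => ⟨SchStep.horiz :: t.1, isBig_horiz_cons t.2.1, by
        have := t.2.2; simp [SchStep.len]; omega⟩)
      (fun x => ⟨SchStep.up :: x.2.1.1 ++ SchStep.down :: x.2.2.1, by
        refine ⟨isBig_up_append x.2.1.2.1 x.2.2.2.1, ?_⟩
        rw [pathLen_up_down, x.2.1.2.2, x.2.2.2.2]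
        have := Finset.HasAntidiagonal.mem_antidiagonal.1 x.1.2
        omega⟩) with hF
  have hbij : Function.Bijective F := by
    constructor
    · rintro (⟨t1, ht1⟩ | ⟨⟨ij1, hij1⟩, ⟨q1, hq1⟩, ⟨r1, hr1⟩⟩)
        (⟨t2, ht2⟩ | ⟨⟨ij2, hij2⟩, ⟨q2, hq2⟩, ⟨r2, hr2⟩⟩) h <;>
        simp only [hF, Sum.elim_inl, Sum.elim_inr, Subtype.mk.injEq, List.cons_append,
          List.cons_eq_cons] at h
      · rw [Sum.inl.injEq, Subtype.mk.injEq]; exact h.2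
      · exact absurd h.1 (by simp)
      · exact absurd h.1 (by simp)
      · obtain ⟨-, h⟩ := h
        obtain ⟨hq, hr⟩ := split_unique hq1.1 hq2.1 h
        subst hq; subst hr
        have hij : ij1 = ij2 := by
          have h1 : pathLen q1 = 2 * ij1.1 := hq1.2
          have h2 : pathLen q1 = 2 * ij2.1 := hq2.2
          have h3 : pathLen r1 = 2 * ij1.2 := hr1.2
          have h4 : pathLen r1 = 2 * ij2.2 := hr2.2
          have e1 : ij1.1 = ij2.1 := by omega
          have e2 : ij1.2 = ij2.2 := by omega
          exact Prod.ext e1 e2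
        subst hij
        rfl
    · rintro ⟨p, hp, hlen⟩
      have hne : p ≠ [] := by
        intro h; subst h; simp at hlen
      rcases big_decomp hp hne with ⟨t, rfl, ht⟩ | ⟨q, r, rfl, hq, hr⟩
      · refine ⟨Sum.inl ⟨t, ht, ?_⟩, rfl⟩
        simp [SchStep.len] at hlen; omega
      · obtain ⟨i, hi⟩ := pathLen_even_of_height_zero hq.1
        obtain ⟨j, hj⟩ := pathLen_even_of_height_zero hr.1
        have hij : i + j = n := by
          rw [pathLen_up_down, hi, hj] at hlen; omega
        exact ⟨Sum.inr ⟨⟨(i, j), Finset.HasAntidiagonal.mem_antidiagonal.2 hij⟩, ⟨q, hq, hi⟩, ⟨r, hr, hj⟩⟩, rfl⟩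
  have hcard := Nat.card_eq_of_bijective F hbij
  rw [bigN, ← hcard, Nat.card_sum]
  congr 1
  rw [Nat.card_eq_fintype_card, Fintype.card_sigma]
  rw [← Finset.sum_coe_sort (Finset.HasAntidiagonal.antidiagonal n) (fun ij => bigN ij.1 * bigN ij.2)]
  congr 1
  ext ij
  rw [Fintype.card_prod, bigN, bigN, Nat.card_eq_fintype_card, Nat.card_eq_fintype_card]

open PowerSeries in
/-- The generating function `s(x) = ∑ sₙ xⁿ` of the little Schröder numbers. -/
noncomputable def littleSchGF : PowerSeries ℚ :=
  PowerSeries.mk fun n =>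
    (Nat.card {p : List SchStep // IsLittleSchroeder p ∧ pathLen p = 2 * n} : ℚ)

noncomputable def bigSchGF : PowerSeries ℚ :=
  PowerSeries.mk fun n => (bigN n : ℚ)

lemma littleSchGF_coeff (n : ℕ) :
    PowerSeries.coeff n littleSchGF = (littleN n : ℚ) := by
  simp [littleSchGF, littleN]

lemma bigSchGF_coeff (n : ℕ) : PowerSeries.coeff n bigSchGF = (bigN n : ℚ) := by
  simp [bigSchGF]

lemma littleSchGF_eq : littleSchGF = 1 + PowerSeries.X * (bigSchGF * littleSchGF) := by
  ext n
  rcases n with _ | n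
  · simp [littleSchGF_coeff, littleN_zero]
  · rw [littleSchGF_coeff, map_add, PowerSeries.coeff_succ_X_mul, PowerSeries.coeff_mul]
    rw [littleN_succ]
    push_cast
    rw [PowerSeries.coeff_one]
    simp only [Nat.succ_ne_zero, if_false, zero_add]
    exact Finset.sum_congr rfl fun ij _ => by rw [bigSchGF_coeff, littleSchGF_coeff]

lemma bigSchGF_eq :
    bigSchGF = 1 + PowerSeries.X * bigSchGF + PowerSeries.X * bigSchGF ^ 2 := by
  ext n
  rcases n with _ | n
  · simp [bigSchGF_coeff, bigN_zero]
  · rw [bigSchGF_coeff, map_add, map_add, PowerSeries.coeff_succ_X_mul,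
      PowerSeries.coeff_succ_X_mul, sq, PowerSeries.coeff_mul]
    rw [bigN_succ]
    push_cast
    rw [PowerSeries.coeff_one]
    simp only [Nat.succ_ne_zero, if_false, zero_add, bigSchGF_coeff]

/-- The generating function of the little Schröder numbers satisfies the algebraic
equation `2 x s(x)² - (1 + x) s(x) + 1 = 0`. -/
theorem littleSchGF_algebraic_eq :
    2 * PowerSeries.X * littleSchGF ^ 2 - (1 + PowerSeries.X) * littleSchGF + 1 = 0 := by
  have eq1 := littleSchGF_eq
  have eq2 := bigSchGF_eq
  set s := littleSchGF
  set B := bigSchGF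
  set X : PowerSeries ℚ := PowerSeries.X
  linear_combination (X * s - 1 + X * B * s) * eq1 - X * s ^ 2 * eq2
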